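/- Let γ=(γ1,γ2) be a weight, δ=γ1+γ2, let H be a quasi-homogeneous polynomial of generalized degree χ+δ (χ≥0), set 𝓗=(−∂H/∂x2, ∂H/∂x1), and let J be a quasi-homogeneous polynomial of g.d. k≥0. Then there exists a quasi-homogeneous polynomial K of g.d. k+χ+δ such that the Lie bracket satisfies [𝓗, J·E_γ] = (−∂K/∂x2, ∂K/∂x1) + ((k+δ)/(k+χ+δ))·𝓗(J)·E_γ. -/

import Mathlib

open MvPolynomial

lemma X_mul_pderiv_monomial {σ : Type*} [DecidableEq σ] (i : σ) (d : σ →₀ ℕ) (a : ℝ) :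
    X i * pderiv i (monomial d a) = monomial d (a * d i) := by
  rw [pderiv_monomial]
  by_cases h : d i = 0
  · simp [h]
  · rw [X, monomial_mul, add_tsub_cancel_of_le, one_mul]
    rwa [Finsupp.single_le_iff, Nat.one_le_iff_ne_zero]

lemma euler_id (w : Fin 2 → ℕ) {n : ℕ} {f : MvPolynomial (Fin 2) ℝ}
    (hf : f.IsWeightedHomogeneous w n) :
    C (w 0 : ℝ) * (X 0 * pderiv 0 f) + C (w 1 : ℝ) * (X 1 * pderiv 1 f) = C (n : ℝ) * f := by
  conv_lhs => rw [← support_sum_monomial_coeff f]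
  conv_rhs => rw [← support_sum_monomial_coeff f]
  rw [map_sum (pderiv 0), map_sum (pderiv 1)]
  simp only [Finset.mul_sum, ← Finset.sum_add_distrib]
  apply Finset.sum_congr rfl
  intro d hd
  have hw : Finsupp.weight w d = n := hf (mem_support_iff.1 hd)
  rw [_root_.X_mul_pderiv_monomial, _root_.X_mul_pderiv_monomial, C_mul_monomial, C_mul_monomial,
    C_mul_monomial, ← map_add]
  congr 1
  have : (Finsupp.weight w) d = d 0 * w 0 + d 1 * w 1 := by
    rw [Finsupp.weight_apply, Finsupp.sum_fintype _ _ (by simp), Fin.sum_univ_two]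
    simp [smul_eq_mul]
  rw [this] at hw
  have h2 : ((d 0 : ℝ)) * w 0 + (d 1 : ℝ) * w 1 = (n : ℝ) := by exact_mod_cast congrArg (Nat.cast (R := ℝ)) hw
  linear_combination coeff d f * h2

lemma pderiv_comm_fin (i j : Fin 2) (f : MvPolynomial (Fin 2) ℝ) :
    pderiv i (pderiv j f) = pderiv j (pderiv i f) := by
  rcases eq_or_ne i j with rfl | hij
  · rfl
  · induction f using MvPolynomial.induction_on' with
    | add p q hp hq => simp [hp, hq]
    | monomial d a =>
      simp only [pderiv_monomial]
      rw [Finsupp.tsub_apply, Finsupp.tsub_apply, Finsupp.single_eq_of_ne hij,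
        Finsupp.single_eq_of_ne (Ne.symm hij)]
      rw [tsub_tsub, tsub_tsub, add_comm (Finsupp.single j 1)]
      simp only [Nat.sub_zero]
      rw [mul_right_comm]

/-- A planar polynomial vector field `P = (P1, P2)` applied to a polynomial `f`:
`P(f) = P1·∂f/∂x1 + P2·∂f/∂x2`. -/
noncomputable def applyVF (P : MvPolynomial (Fin 2) ℝ × MvPolynomial (Fin 2) ℝ)
    (f : MvPolynomial (Fin 2) ℝ) : MvPolynomial (Fin 2) ℝ :=
  P.1 * pderiv 0 f + P.2 * pderiv 1 f

/-- The Lie bracket of two planar polynomial vector fields: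
`[P,Q] = (P(Q1) − Q(P1), P(Q2) − Q(P2))`. -/
noncomputable def lieVF (P Q : MvPolynomial (Fin 2) ℝ × MvPolynomial (Fin 2) ℝ) :
    MvPolynomial (Fin 2) ℝ × MvPolynomial (Fin 2) ℝ :=
  (applyVF P Q.1 - applyVF Q P.1, applyVF P Q.2 - applyVF Q P.2)

/-- The Euler vector field `E_γ = (γ1·x1, γ2·x2)`. -/
noncomputable def eulerVF (γ1 γ2 : ℕ) : MvPolynomial (Fin 2) ℝ × MvPolynomial (Fin 2) ℝ :=
  ((γ1 : ℝ) • X 0, (γ2 : ℝ) • X 1)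

/-- The Hamiltonian vector field `(−∂H/∂x2, ∂H/∂x1)` of a polynomial `H`. -/
noncomputable def hamVF (H : MvPolynomial (Fin 2) ℝ) :
    MvPolynomial (Fin 2) ℝ × MvPolynomial (Fin 2) ℝ :=
  (-(pderiv 1 H), pderiv 0 H)

/-- Multiplication of a planar vector field by a scalar polynomial. -/
noncomputable def smulVF (J : MvPolynomial (Fin 2) ℝ)
    (P : MvPolynomial (Fin 2) ℝ × MvPolynomial (Fin 2) ℝ) :
    MvPolynomial (Fin 2) ℝ × MvPolynomial (Fin 2) ℝ :=
  (J * P.1, J * P.2)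

/-- The divergence `∂P1/∂x1 + ∂P2/∂x2` of a planar polynomial vector field. -/
noncomputable def divVF (P : MvPolynomial (Fin 2) ℝ × MvPolynomial (Fin 2) ℝ) :
    MvPolynomial (Fin 2) ℝ :=
  pderiv 0 P.1 + pderiv 1 P.2

/-- **Lemma 2, part 1.** Let `γ=(γ1,γ2)` be a weight, `δ=γ1+γ2`, `H` a
quasi-homogeneous polynomial of g.d. `χ+δ` (`χ ≥ 0`), `𝓗 = (−∂H/∂x2, ∂H/∂x1)`, and `J` a
quasi-homogeneous polynomial of g.d. `k ≥ 0`. Then there is a quasi-homogeneous polynomial `K`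
of g.d. `k+χ+δ` with `[𝓗, J·E_γ] = (−∂K/∂x2, ∂K/∂x1) + ((k+δ)/(k+χ+δ))·𝓗(J)·E_γ`. -/
theorem lie_ham_smul_euler (γ1 γ2 : ℕ) (hγ1 : 0 < γ1) (hγ2 : 0 < γ2)
    (hcop : Nat.Coprime γ1 γ2) (χ k : ℕ)
    (H : MvPolynomial (Fin 2) ℝ)
    (hH : H.IsWeightedHomogeneous ![γ1, γ2] (χ + (γ1 + γ2)))
    (J : MvPolynomial (Fin 2) ℝ) (hJ : J.IsWeightedHomogeneous ![γ1, γ2] k) :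
    ∃ K : MvPolynomial (Fin 2) ℝ,
      K.IsWeightedHomogeneous ![γ1, γ2] (k + χ + (γ1 + γ2)) ∧
      lieVF (hamVF H) (smulVF J (eulerVF γ1 γ2)) =
        hamVF K + (((k + (γ1 + γ2) : ℕ) : ℝ) / ((k + χ + (γ1 + γ2) : ℕ) : ℝ)) •
          smulVF (applyVF (hamVF H) J) (eulerVF γ1 γ2) := by
  have h10 : (1 : Fin 2) ≠ 0 := by decide
  have h01 : (0 : Fin 2) ≠ 1 := by decide
  have hmR : ((k + χ + (γ1 + γ2) : ℕ) : ℝ) ≠ 0 := Nat.cast_ne_zero.mpr (by omega)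
  set cR : ℝ := ((k + (γ1 + γ2) : ℕ) : ℝ) / ((k + χ + (γ1 + γ2) : ℕ) : ℝ) with hcRdef
  set bR : ℝ := -(((χ : ℝ) * ((χ : ℝ) + (γ1 : ℝ) + (γ2 : ℝ))) /
      ((k + χ + (γ1 + γ2) : ℕ) : ℝ)) with hbRdef
  -- Euler identities
  have EH := euler_id ![γ1, γ2] hH
  have EJ := euler_id ![γ1, γ2] hJ
  simp only [Matrix.cons_val_zero, Matrix.cons_val_one, Matrix.head_cons,
    Nat.cast_add, map_add] at EH EJ
  have DH0 := congrArg (pderiv 0) EH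
  have DH1 := congrArg (pderiv 1) EH
  simp only [map_add, pderiv_C_mul, pderiv_mul, pderiv_X_self, pderiv_X_of_ne h01,
    pderiv_X_of_ne h10, pderiv_C, zero_mul, mul_zero, zero_add, add_zero, one_mul,
    mul_one] at DH0 DH1
  rw [pderiv_comm_fin 1 0 H] at DH1
  -- scalar relations
  have hcC : ((C (k : ℝ) + C (χ : ℝ) + C (γ1 : ℝ) + C (γ2 : ℝ) : MvPolynomial (Fin 2) ℝ)) * C cR
      = C (k : ℝ) + C (γ1 : ℝ) + C (γ2 : ℝ) := by
    simp only [← map_add, ← map_mul]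
    refine congrArg C ?_
    rw [hcRdef]
    push_cast
    field_simp
    ring
  have hbC : ((C (k : ℝ) + C (χ : ℝ) + C (γ1 : ℝ) + C (γ2 : ℝ) : MvPolynomial (Fin 2) ℝ)) * C bR
      = -(C (χ : ℝ) * (C (χ : ℝ) + C (γ1 : ℝ) + C (γ2 : ℝ))) := by
    simp only [← map_add, ← map_mul, ← map_neg]
    refine congrArg C ?_
    rw [hbRdef]
    push_cast
    field_simp
    ring
  have hCne : (C ((k + χ + (γ1 + γ2) : ℕ) : ℝ) : MvPolynomial (Fin 2) ℝ) ≠ 0 :=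
    fun h => hmR (MvPolynomial.C_injective (Fin 2) ℝ (by simpa using h))
  refine ⟨C bR * (J * H), ?_, ?_⟩
  · have he : k + χ + (γ1 + γ2) = 0 + (k + (χ + (γ1 + γ2))) := by omega
    rw [he]
    exact (isWeightedHomogeneous_C _ bR).mul (hJ.mul hH)
  · simp only [lieVF, applyVF, smulVF, hamVF, eulerVF, Prod.smul_mk, Prod.mk_add_mk,
      Prod.mk.injEq, smul_eq_C_mul]
    constructor
    · apply mul_left_cancel₀ hCne
      simp only [map_neg, pderiv_mul, pderiv_C_mul, pderiv_X_self, pderiv_X_of_ne h01,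
        pderiv_X_of_ne h10, pderiv_C, mul_zero, zero_mul, add_zero, zero_add, mul_one, one_mul,
        Nat.cast_add, map_add]
      linear_combination
        (C (k : ℝ) + C (χ : ℝ) + C (γ1 : ℝ) + C (γ2 : ℝ)) * J * DH1
        + C (χ : ℝ) * pderiv 1 J * EH
        - C (χ : ℝ) * pderiv 1 H * EJ
        + (pderiv 1 J * H + J * pderiv 1 H) * hbC
        - ((-(pderiv 1 H) * pderiv 0 J + pderiv 0 H * pderiv 1 J) * (C (γ1 : ℝ) * X 0)) * hcC
    · apply mul_left_cancel₀ hCne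
      rw [pderiv_comm_fin 1 0 H]
      simp only [map_neg, pderiv_mul, pderiv_C_mul, pderiv_X_self, pderiv_X_of_ne h01,
        pderiv_X_of_ne h10, pderiv_C, mul_zero, zero_mul, add_zero, zero_add, mul_one, one_mul,
        Nat.cast_add, map_add]
      linear_combination
        - ((C (k : ℝ) + C (χ : ℝ) + C (γ1 : ℝ) + C (γ2 : ℝ)) * J * DH0)
        - C (χ : ℝ) * pderiv 0 J * EH
        + C (χ : ℝ) * pderiv 0 H * EJ
        - (pderiv 0 J * H + J * pderiv 0 H) * hbC
        - ((-(pderiv 1 H) * pderiv 0 J + pderiv 0 H * pderiv 1 J) * (C (γ2 : ℝ) * X 1)) * hcC
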